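/- arXiv:1112.3610 — 2 statements merged into one kernel-verified Lean document; each statement's English description precedes it below -/
import Mathlib

section
/- For any well-tempered scoring game G, R(G - G) ≥ 0 and L(G - G) ≤ 0, where -G denotes the negation of G. -/
/-- Well-tempered scoring game trees: an integer (final score) or a position
with lists of Left and Right options. -/
inductive WT : Type where
  | int : ℤ → WT
  | node : List WT → List WT → WT

namespace WT

/-- Left options. -/
def lopts : WT → List WT
  | int _ => []
  | node L _ => L

/-- Right options. -/
def ropts : WT → List WT
  | int _ => []
  | node _ R => R

theorem sizeOf_lt_of_mem_lopts : ∀ {G g : WT}, g ∈ G.lopts → sizeOf g < sizeOf G := by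
  intro G g h
  cases G with
  | int n => simp [lopts] at h
  | node L R =>
    simp only [lopts] at h
    have h1 := List.sizeOf_lt_of_mem h
    have h2 : sizeOf (WT.node L R) = 1 + sizeOf L + sizeOf R := by simp
    omega

theorem sizeOf_lt_of_mem_ropts : ∀ {G g : WT}, g ∈ G.ropts → sizeOf g < sizeOf G := by
  intro G g h
  cases G with
  | int n => simp [ropts] at h
  | node L R =>
    simp only [ropts] at h
    have h1 := List.sizeOf_lt_of_mem h
    have h2 : sizeOf (WT.node L R) = 1 + sizeOf L + sizeOf R := by simp
    omega

/-- Disjunctive sum of two games. -/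
def add (G H : WT) : WT :=
  match G, H with
  | int m, int n => int (m + n)
  | G, H =>
    node ((G.lopts.attach.map fun g => add g.1 H) ++ (H.lopts.attach.map fun h => add G h.1))
         ((G.ropts.attach.map fun g => add g.1 H) ++ (H.ropts.attach.map fun h => add G h.1))
termination_by sizeOf G + sizeOf H
decreasing_by
  all_goals
    first
      | (have := sizeOf_lt_of_mem_lopts g.2; omega)
      | (have := sizeOf_lt_of_mem_lopts h.2; omega)
      | (have := sizeOf_lt_of_mem_ropts g.2; omega)
      | (have := sizeOf_lt_of_mem_ropts h.2; omega)

/-- Negation of a game: swap players and negate scores. -/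
def neg : WT → WT
  | int n => int (-n)
  | node L R =>
    node ((WT.node L R).ropts.attach.map fun g => neg g.1)
         ((WT.node L R).lopts.attach.map fun g => neg g.1)
termination_by G => sizeOf G
decreasing_by
  all_goals
    first
      | exact sizeOf_lt_of_mem_lopts g.2
      | exact sizeOf_lt_of_mem_ropts g.2

def lmax : List ℤ → ℤ
  | [] => 0
  | x :: xs => xs.foldl max x

def lmin : List ℤ → ℤ
  | [] => 0
  | x :: xs => xs.foldl min x

/-- The pair (left outcome, right outcome). -/
def out : WT → ℤ × ℤ
  | int n => (n, n)
  | node L R =>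
    (lmax ((WT.node L R).lopts.attach.map fun g => (out g.1).2),
     lmin ((WT.node L R).ropts.attach.map fun g => (out g.1).1))
termination_by G => sizeOf G
decreasing_by
  all_goals
    first
      | exact sizeOf_lt_of_mem_lopts g.2
      | exact sizeOf_lt_of_mem_ropts g.2

/-- Left outcome L(G): optimal score when Left moves first. -/
def Lout (G : WT) : ℤ := G.out.1

/-- Right outcome R(G): optimal score when Right moves first. -/
def Rout (G : WT) : ℤ := G.out.2

/-- `IsWT G p` : `G` is a well-tempered game of parity `p`
(`false` = even-tempered, `true` = odd-tempered). -/
inductive IsWT : WT → Bool → Prop where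
  | int (n : ℤ) : IsWT (WT.int n) false
  | node {L R : List WT} {p : Bool} (hL : L ≠ []) (hR : R ≠ [])
      (hLp : ∀ g ∈ L, IsWT g p) (hRp : ∀ g ∈ R, IsWT g p) :
      IsWT (WT.node L R) (!p)

/-- `G` is a well-tempered game (of some parity). -/
def Wt (G : WT) : Prop := ∃ p, IsWT G p

/-- Parity, computed structurally (`false` = even-tempered, `true` = odd-tempered;
agrees with `IsWT` on well-tempered games). -/
def par : WT → Bool
  | int _ => false
  | node [] _ => true
  | node (g :: _) _ => !(par g)

/-- Final score under optimal play when Left moves last. -/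
def Lf (G : WT) : ℤ := if G.par then G.Lout else G.Rout

/-- Final score under optimal play when Right moves last. -/
def Rf (G : WT) : ℤ := if G.par then G.Rout else G.Lout

/-- `G ≲ H` : for every well-tempered `X`, `L(G+X) ≤ L(H+X)` and `R(G+X) ≤ R(H+X)`. -/
def Le (G H : WT) : Prop :=
  ∀ X : WT, X.Wt → (G.add X).Lout ≤ (H.add X).Lout ∧ (G.add X).Rout ≤ (H.add X).Rout

/-- `G ≳ H`. -/
def Ge (G H : WT) : Prop := Le H G

/-- `G ≈ H` : equivalence of scoring games. -/
def Equiv (G H : WT) : Prop :=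
  ∀ X : WT, X.Wt → (G.add X).Lout = (H.add X).Lout ∧ (G.add X).Rout = (H.add X).Rout

/-- `G` and `H` are well-tempered with the same parity. -/
def SamePar (G H : WT) : Prop := ∃ p, IsWT G p ∧ IsWT H p

/-- `G` takes values in `S`: every integer subgame lies in `S`. -/
inductive Valued (S : Set ℤ) : WT → Prop where
  | int {n : ℤ} : n ∈ S → Valued S (WT.int n)
  | node {L R : List WT} : (∀ g ∈ L, Valued S g) → (∀ g ∈ R, Valued S g) →
      Valued S (WT.node L R)

/-- `Subgame H G` : `H` is a subgame of `G`. -/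
inductive Subgame : WT → WT → Prop where
  | refl (G : WT) : Subgame G G
  | left {H G' : WT} {L R : List WT} : G' ∈ L → Subgame H G' → Subgame H (WT.node L R)
  | right {H G' : WT} {L R : List WT} : G' ∈ R → Subgame H G' → Subgame H (WT.node L R)

/-- `gap G p` : supremum of `R(H) - L(H)` over subgames `H` of `G` of parity `p`
(as an element of `WithBot ℤ`; the supremum of the empty set is `⊥ = -∞`). -/
noncomputable def gap (G : WT) (p : Bool) : WithBot ℤ :=
  sSup {x : WithBot ℤ | ∃ H : WT, Subgame H G ∧ IsWT H p ∧ x = ((H.Rout - H.Lout : ℤ) : WithBot ℤ)}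

/-- Heating by `t`. -/
def heat (t : ℤ) : WT → WT
  | int n => int n
  | node L R =>
    node ((WT.node L R).lopts.attach.map fun g => (WT.int t).add (heat t g.1))
         ((WT.node L R).ropts.attach.map fun g => (WT.int (-t)).add (heat t g.1))
termination_by G => sizeOf G
decreasing_by
  all_goals
    first
      | exact sizeOf_lt_of_mem_lopts g.2
      | exact sizeOf_lt_of_mem_ropts g.2

end WT


namespace WT

theorem lmax_mem_le {x : ℤ} : ∀ {l : List ℤ}, x ∈ l → x ≤ lmax l := by
  have key : ∀ (l : List ℤ) (a : ℤ), a ≤ l.foldl max a ∧ ∀ x ∈ l, x ≤ l.foldl max a := by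
    intro l
    induction l with
    | nil => simp
    | cons b t ih =>
      intro a
      simp only [List.foldl_cons, List.mem_cons]
      refine ⟨le_trans (le_max_left a b) (ih (max a b)).1, ?_⟩
      rintro x (rfl | hx)
      · exact le_trans (le_max_right a x) (ih (max a x)).1
      · exact (ih (max a b)).2 x hx
  intro l hx
  cases l with
  | nil => simp at hx
  | cons a t =>
    rcases List.mem_cons.1 hx with rfl | hx
    · exact (key t x).1
    · exact (key t a).2 x hx

theorem lmin_le_mem {x : ℤ} : ∀ {l : List ℤ}, x ∈ l → lmin l ≤ x := by
  have key : ∀ (l : List ℤ) (a : ℤ), l.foldl min a ≤ a ∧ ∀ x ∈ l, l.foldl min a ≤ x := by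
    intro l
    induction l with
    | nil => simp
    | cons b t ih =>
      intro a
      simp only [List.foldl_cons, List.mem_cons]
      refine ⟨le_trans (ih (min a b)).1 (min_le_left a b), ?_⟩
      rintro x (rfl | hx)
      · exact le_trans (ih (min a x)).1 (min_le_right a x)
      · exact (ih (min a b)).2 x hx
  intro l hx
  cases l with
  | nil => simp at hx
  | cons a t =>
    rcases List.mem_cons.1 hx with rfl | hx
    · exact (key t x).1
    · exact (key t a).2 x hx

theorem lmin_nonneg : ∀ {l : List ℤ}, (∀ x ∈ l, 0 ≤ x) → 0 ≤ lmin l := by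
  have key : ∀ (l : List ℤ) (a : ℤ), 0 ≤ a → (∀ x ∈ l, 0 ≤ x) → 0 ≤ l.foldl min a := by
    intro l
    induction l with
    | nil => simpa using fun a ha => ha
    | cons b t ih =>
      intro a ha h
      simp only [List.foldl_cons]
      exact ih (min a b) (le_min ha (h b (by simp))) fun x hx => h x (by simp [hx])
  intro l h
  cases l with
  | nil => simp [lmin]
  | cons a t => exact key t a (h a (by simp)) fun x hx => h x (by simp [hx])

theorem lmax_nonpos : ∀ {l : List ℤ}, (∀ x ∈ l, x ≤ 0) → lmax l ≤ 0 := by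
  have key : ∀ (l : List ℤ) (a : ℤ), a ≤ 0 → (∀ x ∈ l, x ≤ 0) → l.foldl max a ≤ 0 := by
    intro l
    induction l with
    | nil => simpa using fun a ha => ha
    | cons b t ih =>
      intro a ha h
      simp only [List.foldl_cons]
      exact ih (max a b) (max_le ha (h b (by simp))) fun x hx => h x (by simp [hx])
  intro l h
  cases l with
  | nil => simp [lmax]
  | cons a t => exact key t a (h a (by simp)) fun x hx => h x (by simp [hx])

theorem neg_node (L R : List WT) :
    (WT.node L R).neg = WT.node (R.map neg) (L.map neg) := by
  rw [neg]
  simp [lopts, ropts, List.attach_map_val]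

theorem add_node_left (L R : List WT) (H : WT) :
    (WT.node L R).add H =
      WT.node (L.map (·.add H) ++ H.lopts.map ((WT.node L R).add ·))
              (R.map (·.add H) ++ H.ropts.map ((WT.node L R).add ·)) := by
  rw [add]
  · simp [lopts, ropts, List.attach_map_val]
  · intro m n h; cases h

theorem add_node_right (G : WT) (L R : List WT) :
    G.add (WT.node L R) =
      WT.node (G.lopts.map (·.add (WT.node L R)) ++ L.map (G.add ·))
              (G.ropts.map (·.add (WT.node L R)) ++ R.map (G.add ·)) := by
  cases G with
  | int n =>
    rw [add]
    · simp [lopts, ropts, List.attach_map_val]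
    · intro m n' _ h; cases h
  | node L' R' =>
    rw [add]
    · simp [lopts, ropts, List.attach_map_val]
    · intro m n h; cases h

theorem Lout_node (L R : List WT) :
    (WT.node L R).Lout = lmax (L.map Rout) := by
  rw [Lout, out]
  simp only [lopts]
  exact congrArg lmax ((List.attach_map_val (l := L) (f := Rout)))

theorem Rout_node (L R : List WT) :
    (WT.node L R).Rout = lmin (R.map Lout) := by
  rw [Rout, out]
  simp only [ropts]
  exact congrArg lmin ((List.attach_map_val (l := R) (f := Lout)))

end WT

theorem mirror_aux (G : WT) : 0 ≤ (G.add G.neg).Rout ∧ (G.add G.neg).Lout ≤ 0 := by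
  cases G with
  | int n =>
    have h1 : WT.neg (WT.int n) = WT.int (-n) := by rw [WT.neg]
    have h2 : (WT.int n).add (WT.int (-n)) = WT.int 0 := by rw [WT.add]; norm_num
    rw [h1, h2]
    simp [WT.Rout, WT.Lout, WT.out]
  | node L R =>
    rw [WT.neg_node, WT.add_node_left]
    simp only [WT.lopts, WT.ropts, List.map_map]
    set nG := WT.node (List.map WT.neg R) (List.map WT.neg L) with hnG
    constructor
    · rw [WT.Rout_node]
      apply WT.lmin_nonneg
      intro x hx
      simp only [List.map_append, List.map_map, List.mem_append, List.mem_map,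
        Function.comp] at hx
      rcases hx with ⟨g, hg, rfl⟩ | ⟨g, hg, rfl⟩
      · -- x = Lout (g.add nG), g ∈ R; mirror reply g.add (neg g)
        rw [hnG, WT.add_node_right, WT.Lout_node]
        have hmem : WT.Rout (g.add g.neg) ∈
            ((g.lopts.map (·.add (WT.node (List.map WT.neg R) (List.map WT.neg L))) ++
              (List.map WT.neg R).map (g.add ·)).map WT.Rout) := by
          simp only [List.map_append, List.map_map, List.mem_append, List.mem_map,
            Function.comp]
          exact Or.inr ⟨g, hg, rfl⟩
        have h0 := (mirror_aux g).1
        exact le_trans h0 (WT.lmax_mem_le hmem)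
      · -- x = Lout ((node L R).add (neg g)), g ∈ L
        rw [WT.add_node_left, WT.Lout_node]
        have hmem : WT.Rout (g.add g.neg) ∈
            ((L.map (·.add g.neg) ++
              g.neg.lopts.map ((WT.node L R).add ·)).map WT.Rout) := by
          simp only [List.map_append, List.map_map, List.mem_append, List.mem_map,
            Function.comp]
          exact Or.inl ⟨g, hg, rfl⟩
        have h0 := (mirror_aux g).1
        exact le_trans h0 (WT.lmax_mem_le hmem)
    · rw [WT.Lout_node]
      apply WT.lmax_nonpos
      intro x hx
      simp only [List.map_append, List.map_map, List.mem_append, List.mem_map,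
        Function.comp] at hx
      rcases hx with ⟨g, hg, rfl⟩ | ⟨g, hg, rfl⟩
      · rw [hnG, WT.add_node_right, WT.Rout_node]
        have hmem : WT.Lout (g.add g.neg) ∈
            ((g.ropts.map (·.add (WT.node (List.map WT.neg R) (List.map WT.neg L))) ++
              (List.map WT.neg L).map (g.add ·)).map WT.Lout) := by
          simp only [List.map_append, List.map_map, List.mem_append, List.mem_map,
            Function.comp]
          exact Or.inr ⟨g, hg, rfl⟩
        have h0 := (mirror_aux g).2
        exact le_trans (WT.lmin_le_mem hmem) h0
      · rw [WT.add_node_left, WT.Rout_node]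
        have hmem : WT.Lout (g.add g.neg) ∈
            ((R.map (·.add g.neg) ++
              g.neg.ropts.map ((WT.node L R).add ·)).map WT.Lout) := by
          simp only [List.map_append, List.map_map, List.mem_append, List.mem_map,
            Function.comp]
          exact Or.inl ⟨g, hg, rfl⟩
        have h0 := (mirror_aux g).2
        exact le_trans (WT.lmin_le_mem hmem) h0
termination_by sizeOf G
decreasing_by
  all_goals
    have h1 := List.sizeOf_lt_of_mem hg
    simp only [WT.node.sizeOf_spec]
    omega


/-- R(G - G) ≥ 0 and L(G - G) ≤ 0. -/
theorem mirror_outcomes (G : WT) (hG : G.Wt) :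
    0 ≤ (G.add G.neg).Rout ∧ (G.add G.neg).Lout ≤ 0 := by
  exact mirror_aux G
end

section
/- Heating is additive in the heating parameter: for any well-tempered scoring game G and integers s, t, the identity ∫^t ∫^s G = ∫^{t+s} G holds (as identity of game trees). -/
namespace WT

theorem add_int_int' (m n : ℤ) : (int m).add (int n) = int (m + n) := by rw [add]

theorem add_int_node' (n : ℤ) (L R : List WT) :
    (int n).add (node L R) = node (L.map fun g => (int n).add g) (R.map fun g => (int n).add g) := by
  rw [add]
  · simp [lopts, ropts, List.attach_map_val]
  · intro _ _ _ h; cases h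

theorem heat_node' (t : ℤ) (L R : List WT) :
    heat t (node L R) = node (L.map fun g => (int t).add (heat t g)) (R.map fun g => (int (-t)).add (heat t g)) := by
  rw [heat]
  simp [lopts, ropts, List.attach_map_val]

theorem int_add_int_add (m n : ℤ) (H : WT) :
    (int m).add ((int n).add H) = (int (m + n)).add H := by
  cases H with
  | int k => rw [add_int_int', add_int_int', add_int_int']; congr 1; ring
  | node L R =>
    rw [add_int_node', add_int_node', add_int_node']
    simp only [List.map_map]
    congr 1 <;> (apply List.map_congr_left; intro g hg;
                 exact int_add_int_add m n g)
termination_by sizeOf H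
decreasing_by
  all_goals first
    | exact sizeOf_lt_of_mem_lopts (show _ ∈ WT.lopts (WT.node _ _) from hg)
    | exact sizeOf_lt_of_mem_ropts (show _ ∈ WT.ropts (WT.node _ _) from hg)

theorem heat_int_add (t n : ℤ) (H : WT) :
    heat t ((int n).add H) = (int n).add (heat t H) := by
  cases H with
  | int k => rw [add_int_int', heat, heat, add_int_int']
  | node L R =>
    rw [add_int_node', heat_node', heat_node', add_int_node']
    simp only [List.map_map]
    congr 1
    · apply List.map_congr_left; intro g hg
      simp only [Function.comp_apply]
      rw [heat_int_add t n g, int_add_int_add, int_add_int_add, Int.add_comm t n]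
    · apply List.map_congr_left; intro g hg
      simp only [Function.comp_apply]
      rw [heat_int_add t n g, int_add_int_add, int_add_int_add, Int.add_comm (-t) n]
termination_by sizeOf H
decreasing_by
  all_goals first
    | exact sizeOf_lt_of_mem_lopts (show _ ∈ WT.lopts (WT.node _ _) from hg)
    | exact sizeOf_lt_of_mem_ropts (show _ ∈ WT.ropts (WT.node _ _) from hg)

theorem heat_heat_aux (s t : ℤ) (G : WT) :
    heat t (heat s G) = heat (t + s) G := by
  cases G with
  | int n =>
    have h : ∀ u : ℤ, heat u (int n) = int n := fun u => by rw [heat]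
    rw [h, h, h]
  | node L R =>
    rw [heat_node' s, heat_node' t, heat_node' (t + s)]
    simp only [List.map_map]
    congr 1
    · apply List.map_congr_left; intro g hg
      simp only [Function.comp_apply]
      rw [heat_int_add, int_add_int_add, heat_heat_aux s t g]
    · apply List.map_congr_left; intro g hg
      simp only [Function.comp_apply]
      rw [heat_int_add, int_add_int_add, heat_heat_aux s t g,
        show -t + -s = -(t + s) from by ring]
termination_by sizeOf G
decreasing_by
  all_goals first
    | exact sizeOf_lt_of_mem_lopts (show _ ∈ WT.lopts (WT.node _ _) from hg)
    | exact sizeOf_lt_of_mem_ropts (show _ ∈ WT.ropts (WT.node _ _) from hg)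

end WT

/-- heating is additive in the heating parameter, as an identity of
game trees: ∫^t ∫^s G = ∫^{t+s} G. -/
theorem heat_heat (G : WT) (hG : G.Wt) (s t : ℤ) :
    WT.heat t (WT.heat s G) = WT.heat (t + s) G :=
  WT.heat_heat_aux s t G
end
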